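/- The diagonal entries of the empirical Gram matrix satisfy E[ Σ_{i=1}^M ( ⟨μ̂_i, μ̂_i⟩_H − ⟨μ_i, μ_i⟩_H )² ] ≤ 4C²/n̄, where the expectation is over the M mutually independent datasets. -/

import Mathlib

open MeasureTheory

/-- Empirical kernel mean embedding of the feature map `φ` based on `n` samples. -/
noncomputable def empEmb {Ξ H : Type*} [NormedAddCommGroup H] [InnerProductSpace ℝ H]
    (φ : Ξ → H) {n : ℕ} (x : Fin n → Ξ) : H := (n : ℝ)⁻¹ • ∑ j, φ (x j)


lemma myMapEvalPi {ι : Type*} [Fintype ι] {α : ι → Type*} [∀ i, MeasurableSpace (α i)]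
    (ν : ∀ i, Measure (α i)) [∀ i, IsProbabilityMeasure (ν i)] (i : ι) :
    (Measure.pi ν).map (Function.eval i) = ν i := by
  ext s hs
  classical
  rw [Measure.map_apply (measurable_pi_apply i) hs, Set.eval_preimage, Measure.pi_pi]
  rw [Finset.prod_eq_single i]
  · rw [Function.update_self]
  · intro j _ hj; rw [Function.update_of_ne hj]; exact measure_univ
  · intro h; exact absurd (Finset.mem_univ i) h

lemma myIntegralEvalPi {ι : Type*} [Fintype ι] {α : ι → Type*} [∀ i, MeasurableSpace (α i)]
    (ν : ∀ i, Measure (α i)) [∀ i, IsProbabilityMeasure (ν i)] (i : ι)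
    {E : Type*} [NormedAddCommGroup E] [NormedSpace ℝ E] (f : α i → E)
    (hf : AEStronglyMeasurable f (ν i)) :
    ∫ x, f (x i) ∂(Measure.pi ν) = ∫ a, f a ∂(ν i) := by
  rw [← myMapEvalPi ν i] at hf ⊢
  exact (integral_map (measurable_pi_apply i).aemeasurable hf).symm

lemma myIntegrableBdd {α E : Type*} [MeasurableSpace α] {μ : Measure α} [IsFiniteMeasure μ]
    [NormedAddCommGroup E] {f : α → E} (hm : AEStronglyMeasurable f μ) (c : ℝ)
    (h : ∀ a, ‖f a‖ ≤ c) : Integrable f μ :=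
  (integrable_const c).mono' hm (Filter.Eventually.of_forall h)



lemma mySumVar {H : Type*} [NormedAddCommGroup H] [InnerProductSpace ℝ H] [CompleteSpace H]
    {Ξ : Type*} [MeasurableSpace Ξ] (P : Measure Ξ) [IsProbabilityMeasure P]
    (g : Ξ → H) (hg : StronglyMeasurable g) (B : ℝ) (hB0 : 0 ≤ B) (hB : ∀ ξ, ‖g ξ‖ ≤ B)
    (h0 : ∫ ξ, g ξ ∂P = 0) :
    ∀ n : ℕ, ∫ x : Fin n → Ξ, ‖∑ j, g (x j)‖ ^ 2 ∂(Measure.pi fun _ => P)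
      ≤ n * ∫ ξ, ‖g ξ‖ ^ 2 ∂P := by
  have hgint : Integrable g P := myIntegrableBdd hg.aestronglyMeasurable B hB
  intro n
  induction n with
  | zero => simp
  | succ n ih =>
    set π : Measure (Fin n → Ξ) := Measure.pi fun _ => P with hπ
    set ρ : Measure (Ξ × (Fin n → Ξ)) := P.prod π with hρ
    set Sn : (Fin n → Ξ) → H := fun y => ∑ j, g (y j) with hSn
    have hSm : StronglyMeasurable Sn :=
      Finset.stronglyMeasurable_fun_sum _ fun j _ => hg.comp_measurable (measurable_pi_apply j)
    have hSB : ∀ y, ‖Sn y‖ ≤ n * B := by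
      intro y
      calc ‖Sn y‖ ≤ ∑ j : Fin n, ‖g (y j)‖ := norm_sum_le _ _
        _ ≤ ∑ j : Fin n, B := Finset.sum_le_sum fun j _ => hB _
        _ = n * B := by simp [mul_comm]
    set F1 : Ξ × (Fin n → Ξ) → ℝ := fun p => ‖g p.1‖ ^ 2 with hF1
    set F2 : Ξ × (Fin n → Ξ) → ℝ := fun p => 2 * (inner ℝ (g p.1) (Sn p.2) : ℝ) with hF2
    set F3 : Ξ × (Fin n → Ξ) → ℝ := fun p => ‖Sn p.2‖ ^ 2 with hF3
    have hg1 : StronglyMeasurable fun p : Ξ × (Fin n → Ξ) => g p.1 :=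
      hg.comp_measurable measurable_fst
    have hS2 : StronglyMeasurable fun p : Ξ × (Fin n → Ξ) => Sn p.2 :=
      hSm.comp_measurable measurable_snd
    have hF1m : StronglyMeasurable F1 :=
      (continuous_pow 2).comp_stronglyMeasurable hg1.norm
    have hF2m : StronglyMeasurable F2 := (hg1.inner hS2).const_mul 2
    have hF3m : StronglyMeasurable F3 :=
      (continuous_pow 2).comp_stronglyMeasurable hS2.norm
    have hF1i : Integrable F1 ρ := by
      refine myIntegrableBdd hF1m.aestronglyMeasurable (B ^ 2) fun p => ?_
      rw [Real.norm_eq_abs, abs_of_nonneg (by positivity)]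
      exact pow_le_pow_left₀ (norm_nonneg _) (hB _) 2
    have hF2i : Integrable F2 ρ := by
      refine myIntegrableBdd hF2m.aestronglyMeasurable (2 * (B * (n * B))) fun p => ?_
      rw [Real.norm_eq_abs, abs_mul, abs_two]
      refine mul_le_mul_of_nonneg_left ?_ (by norm_num)
      exact (abs_real_inner_le_norm _ _).trans
        (mul_le_mul (hB _) (hSB _) (norm_nonneg _) hB0)
    have hF3i : Integrable F3 ρ := by
      refine myIntegrableBdd hF3m.aestronglyMeasurable ((n * B) ^ 2) fun p => ?_
      rw [Real.norm_eq_abs, abs_of_nonneg (by positivity)]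
      exact pow_le_pow_left₀ (norm_nonneg _) (hSB _) 2
    have hmp := measurePreserving_piFinSuccAbove (fun _ : Fin (n + 1) => P) 0
    set e := MeasurableEquiv.piFinSuccAbove (fun _ : Fin (n + 1) => Ξ) 0 with he
    have key : ∫ x : Fin (n + 1) → Ξ, ‖∑ j, g (x j)‖ ^ 2 ∂(Measure.pi fun _ => P)
        = ∫ p, (F1 p + F2 p + F3 p) ∂ρ := by
      have := hmp.integral_comp' (f := e) (fun p => F1 p + F2 p + F3 p)
      rw [← this]
      refine integral_congr_ae (Filter.Eventually.of_forall fun x => ?_)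
      have he1 : (e x).1 = x 0 := rfl
      have he2 : ∀ j, (e x).2 j = x j.succ := by
        intro j
        show x (Fin.succAbove 0 j) = x j.succ
        rw [Fin.zero_succAbove]
      show ‖∑ j, g (x j)‖ ^ 2 = F1 (e x) + F2 (e x) + F3 (e x)
      have hsum : ∑ j, g (x j) = g (e x).1 + Sn (e x).2 := by
        simp only [Fin.sum_univ_succ, he1, hSn, he2]
      rw [hsum, norm_add_sq_real]
    have hadd : Integrable (fun p => F1 p + F2 p) ρ := hF1i.add hF2i
    rw [key, integral_add hadd hF3i, integral_add hF1i hF2i]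
    have e1 : ∫ p, F1 p ∂ρ = ∫ ξ, ‖g ξ‖ ^ 2 ∂P := by
      rw [hρ, integral_prod _ hF1i]
      simp [hF1]
    have e2 : ∫ p, F2 p ∂ρ = 0 := by
      rw [hρ, integral_prod_symm _ hF2i]
      have : ∀ y : Fin n → Ξ, ∫ a, F2 (a, y) ∂P = 0 := by
        intro y
        simp only [hF2]
        rw [integral_const_mul 2]
        have hc : ∀ a, (inner ℝ (g a) (Sn y) : ℝ) = (inner ℝ (Sn y) (g a) : ℝ) :=
          fun a => real_inner_comm _ _
        simp_rw [hc]
        rw [integral_inner hgint, h0, inner_zero_right, mul_zero]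
      simp [this]
    have e3 : ∫ p, F3 p ∂ρ ≤ n * ∫ ξ, ‖g ξ‖ ^ 2 ∂P := by
      rw [hρ, integral_prod _ hF3i]
      simpa [hF3] using ih
    rw [e1, e2, add_zero]
    push_cast
    linarith [e3]



section
variable {H : Type*} [NormedAddCommGroup H] [InnerProductSpace ℝ H] [CompleteSpace H]
  {Ξ : Type*} [MeasurableSpace Ξ]

lemma myEmpSM (φ : Ξ → H) (hφm : StronglyMeasurable φ) (n : ℕ) :
    StronglyMeasurable fun x : Fin n → Ξ => empEmb φ x :=
  (Finset.stronglyMeasurable_fun_sum _ fun j _ =>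
    hφm.comp_measurable (measurable_pi_apply j)).const_smul _

lemma myEmpNorm (φ : Ξ → H) (C : ℝ) (hC : 0 < C) (hφ : ∀ ξ, ‖φ ξ‖ ^ 2 ≤ C)
    {n : ℕ} (hn : 0 < n) (x : Fin n → Ξ) : ‖empEmb φ x‖ ≤ Real.sqrt C := by
  have hb : ∀ ξ, ‖φ ξ‖ ≤ Real.sqrt C := by
    intro ξ
    rw [show ‖φ ξ‖ = Real.sqrt (‖φ ξ‖ ^ 2) by rw [Real.sqrt_sq (norm_nonneg _)]]
    exact Real.sqrt_le_sqrt (hφ ξ)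
  rw [empEmb, norm_smul, Real.norm_eq_abs, abs_of_nonneg (by positivity : (0:ℝ) ≤ (n : ℝ)⁻¹)]
  calc (n : ℝ)⁻¹ * ‖∑ j, φ (x j)‖ ≤ (n : ℝ)⁻¹ * (n * Real.sqrt C) := by
        refine mul_le_mul_of_nonneg_left ?_ (by positivity)
        calc ‖∑ j : Fin n, φ (x j)‖ ≤ ∑ j : Fin n, ‖φ (x j)‖ := norm_sum_le _ _
          _ ≤ ∑ j : Fin n, Real.sqrt C := Finset.sum_le_sum fun j _ => hb _
          _ = n * Real.sqrt C := by simp [mul_comm]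
    _ = Real.sqrt C := by
        field_simp
  -- note: ‖(n:ℝ)⁻¹‖ = (n:ℝ)⁻¹ handled
lemma myDev (P : Measure Ξ) [IsProbabilityMeasure P] (φ : Ξ → H)
    (hφm : StronglyMeasurable φ) (C : ℝ) (hC : 0 < C) (hφ : ∀ ξ, ‖φ ξ‖ ^ 2 ≤ C)
    (n : ℕ) (hn : 0 < n) (μ0 : H) (hμ0 : μ0 = ∫ ξ, φ ξ ∂P) :
    ∫ x : Fin n → Ξ, ‖empEmb φ x - μ0‖ ^ 2 ∂(Measure.pi fun _ => P) ≤ C / n := by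
  have hb : ∀ ξ, ‖φ ξ‖ ≤ Real.sqrt C := by
    intro ξ
    rw [show ‖φ ξ‖ = Real.sqrt (‖φ ξ‖ ^ 2) by rw [Real.sqrt_sq (norm_nonneg _)]]
    exact Real.sqrt_le_sqrt (hφ ξ)
  have hφint : Integrable φ P := myIntegrableBdd hφm.aestronglyMeasurable _ hb
  have hμb : ‖μ0‖ ≤ Real.sqrt C := by
    rw [hμ0]
    calc ‖∫ ξ, φ ξ ∂P‖ ≤ ∫ ξ, ‖φ ξ‖ ∂P := norm_integral_le_integral_norm _
      _ ≤ ∫ _ξ, Real.sqrt C ∂P := integral_mono hφint.norm (integrable_const _) hb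
      _ = Real.sqrt C := by simp
  set g : Ξ → H := fun ξ => φ ξ - μ0 with hg
  have hgm : StronglyMeasurable g := hφm.sub stronglyMeasurable_const
  have hgB : ∀ ξ, ‖g ξ‖ ≤ Real.sqrt C + Real.sqrt C := fun ξ =>
    (norm_sub_le _ _).trans (add_le_add (hb ξ) hμb)
  have h0 : ∫ ξ, g ξ ∂P = 0 := by
    rw [hg]
    rw [integral_sub hφint (integrable_const _), integral_const, ← hμ0]
    simp
  have hg2 : ∫ ξ, ‖g ξ‖ ^ 2 ∂P ≤ C := by
    have hexp : ∀ ξ, ‖g ξ‖ ^ 2 = ‖φ ξ‖ ^ 2 - 2 * (inner ℝ (φ ξ) μ0 : ℝ) + ‖μ0‖ ^ 2 :=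
      fun ξ => norm_sub_sq_real _ _
    have hi1 : Integrable (fun ξ => ‖φ ξ‖ ^ 2) P := by
      refine myIntegrableBdd (((continuous_pow 2).comp_stronglyMeasurable
        hφm.norm).aestronglyMeasurable) C fun ξ => ?_
      rw [Real.norm_eq_abs, abs_of_nonneg (by positivity)]
      exact hφ ξ
    have hi2 : Integrable (fun ξ => 2 * (inner ℝ (φ ξ) μ0 : ℝ)) P := by
      refine myIntegrableBdd ((hφm.inner stronglyMeasurable_const).const_mul
        2).aestronglyMeasurable (2 * (Real.sqrt C * Real.sqrt C)) fun ξ => ?_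
      rw [Real.norm_eq_abs, abs_mul, abs_two]
      exact mul_le_mul_of_nonneg_left ((abs_real_inner_le_norm _ _).trans
        (mul_le_mul (hb _) hμb (norm_nonneg _) (Real.sqrt_nonneg _))) (by norm_num)
    have hinner : ∫ ξ, (inner ℝ (φ ξ) μ0 : ℝ) ∂P = ‖μ0‖ ^ 2 := by
      have hc : ∀ ξ, (inner ℝ (φ ξ) μ0 : ℝ) = (inner ℝ μ0 (φ ξ) : ℝ) := fun ξ => real_inner_comm _ _
      simp_rw [hc]
      rw [integral_inner hφint, ← hμ0, real_inner_self_eq_norm_sq]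
    have : ∫ ξ, ‖g ξ‖ ^ 2 ∂P
        = ∫ ξ, ‖φ ξ‖ ^ 2 ∂P - 2 * ‖μ0‖ ^ 2 + ‖μ0‖ ^ 2 := by
      simp_rw [hexp]
      have hi12 : Integrable (fun ξ => ‖φ ξ‖ ^ 2 - 2 * (inner ℝ (φ ξ) μ0 : ℝ)) P := hi1.sub hi2
      rw [integral_add hi12 (integrable_const _), integral_sub hi1 hi2,
        integral_const_mul 2, hinner, integral_const]
      simp
    rw [this]
    have hφ2 : ∫ ξ, ‖φ ξ‖ ^ 2 ∂P ≤ C := by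
      calc ∫ ξ, ‖φ ξ‖ ^ 2 ∂P ≤ ∫ _ξ, C ∂P := integral_mono hi1 (integrable_const _) hφ
        _ = C := by simp
    nlinarith [sq_nonneg ‖μ0‖]
  have hkey : ∀ x : Fin n → Ξ, empEmb φ x - μ0 = (n : ℝ)⁻¹ • ∑ j, g (x j) := by
    intro x
    rw [hg]
    have : ∑ j : Fin n, (φ (x j) - μ0) = (∑ j, φ (x j)) - n • μ0 := by
      rw [Finset.sum_sub_distrib, Finset.sum_const, Finset.card_univ, Fintype.card_fin]
    rw [this, smul_sub, empEmb]
    congr 1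
    rw [← Nat.cast_smul_eq_nsmul ℝ, smul_smul, inv_mul_cancel₀ (by exact_mod_cast hn.ne' : (n:ℝ) ≠ 0),
      one_smul]
  have : ∫ x : Fin n → Ξ, ‖empEmb φ x - μ0‖ ^ 2 ∂(Measure.pi fun _ => P)
      = ((n : ℝ)⁻¹) ^ 2 * ∫ x : Fin n → Ξ, ‖∑ j, g (x j)‖ ^ 2 ∂(Measure.pi fun _ => P) := by
    rw [← integral_const_mul]
    refine integral_congr_ae (Filter.Eventually.of_forall fun x => ?_)
    show ‖empEmb φ x - μ0‖ ^ 2 = ((n : ℝ)⁻¹) ^ 2 * ‖∑ j, g (x j)‖ ^ 2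
    rw [hkey x, norm_smul, mul_pow, Real.norm_eq_abs, abs_of_nonneg (by positivity)]
  rw [this]
  have hvar := mySumVar P g hgm (Real.sqrt C + Real.sqrt C)
    (by positivity) hgB h0 n
  have hn' : (0:ℝ) < n := by exact_mod_cast hn
  calc ((n : ℝ)⁻¹) ^ 2 * ∫ x : Fin n → Ξ, ‖∑ j, g (x j)‖ ^ 2 ∂(Measure.pi fun _ => P)
      ≤ ((n : ℝ)⁻¹) ^ 2 * (n * ∫ ξ, ‖g ξ‖ ^ 2 ∂P) := by
        refine mul_le_mul_of_nonneg_left hvar (by positivity)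
    _ ≤ ((n : ℝ)⁻¹) ^ 2 * (n * C) := by
        refine mul_le_mul_of_nonneg_left (mul_le_mul_of_nonneg_left hg2 (by positivity))
          (by positivity)
    _ = C / n := by field_simp
end



section
variable {H : Type*} [NormedAddCommGroup H] [InnerProductSpace ℝ H] [CompleteSpace H]
  {Ξ : Type*} [MeasurableSpace Ξ]

set_option linter.unusedSectionVars false

lemma myNormSqDiff (C : ℝ) (hC : 0 < C) (a b : H) (ha : ‖a‖ ≤ Real.sqrt C)
    (hb : ‖b‖ ≤ Real.sqrt C) :
    ((inner ℝ a a : ℝ) - (inner ℝ b b : ℝ)) ^ 2 ≤ 4 * C * ‖a - b‖ ^ 2 := by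
  rw [real_inner_self_eq_norm_sq, real_inner_self_eq_norm_sq]
  have hid : ‖a‖ ^ 2 - ‖b‖ ^ 2 = (inner ℝ (a - b) (a + b) : ℝ) := by
    rw [inner_sub_left, inner_add_right, inner_add_right, real_inner_self_eq_norm_sq,
      real_inner_self_eq_norm_sq, real_inner_comm b a]
    ring
  have habs : |‖a‖ ^ 2 - ‖b‖ ^ 2| ≤ ‖a - b‖ * (2 * Real.sqrt C) := by
    rw [hid]
    refine (abs_real_inner_le_norm _ _).trans ?_
    refine mul_le_mul_of_nonneg_left ?_ (norm_nonneg _)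
    calc ‖a + b‖ ≤ ‖a‖ + ‖b‖ := norm_add_le _ _
      _ ≤ 2 * Real.sqrt C := by linarith
  calc (‖a‖ ^ 2 - ‖b‖ ^ 2) ^ 2 = |‖a‖ ^ 2 - ‖b‖ ^ 2| ^ 2 := (sq_abs _).symm
    _ ≤ (‖a - b‖ * (2 * Real.sqrt C)) ^ 2 :=
        pow_le_pow_left₀ (abs_nonneg _) habs 2
    _ = 4 * C * ‖a - b‖ ^ 2 := by
        rw [mul_pow, mul_pow, Real.sq_sqrt hC.le]; ring

lemma myDiag (P : Measure Ξ) [IsProbabilityMeasure P] (φ : Ξ → H)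
    (hφm : StronglyMeasurable φ) (C : ℝ) (hC : 0 < C) (hφ : ∀ ξ, ‖φ ξ‖ ^ 2 ≤ C)
    (n : ℕ) (hn : 0 < n) (μ0 : H) (hμ0 : μ0 = ∫ ξ, φ ξ ∂P) :
    ∫ x : Fin n → Ξ, ((inner ℝ (empEmb φ x) (empEmb φ x) : ℝ) - (inner ℝ μ0 μ0 : ℝ)) ^ 2
      ∂(Measure.pi fun _ => P) ≤ 4 * C ^ 2 / n := by
  have hb : ∀ ξ, ‖φ ξ‖ ≤ Real.sqrt C := by
    intro ξ
    rw [show ‖φ ξ‖ = Real.sqrt (‖φ ξ‖ ^ 2) by rw [Real.sqrt_sq (norm_nonneg _)]]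
    exact Real.sqrt_le_sqrt (hφ ξ)
  have hφint : Integrable φ P := myIntegrableBdd hφm.aestronglyMeasurable _ hb
  have hμb : ‖μ0‖ ≤ Real.sqrt C := by
    rw [hμ0]
    calc ‖∫ ξ, φ ξ ∂P‖ ≤ ∫ ξ, ‖φ ξ‖ ∂P := norm_integral_le_integral_norm _
      _ ≤ ∫ _ξ, Real.sqrt C ∂P := integral_mono hφint.norm (integrable_const _) hb
      _ = Real.sqrt C := by simp
  have hpt : ∀ x : Fin n → Ξ,
      ((inner ℝ (empEmb φ x) (empEmb φ x) : ℝ) - (inner ℝ μ0 μ0 : ℝ)) ^ 2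
        ≤ 4 * C * ‖empEmb φ x - μ0‖ ^ 2 := fun x =>
    myNormSqDiff C hC _ _ (myEmpNorm φ C hC hφ hn x) hμb
  have hdm : StronglyMeasurable fun x : Fin n → Ξ => empEmb φ x - μ0 :=
    (myEmpSM φ hφm n).sub stronglyMeasurable_const
  have hrint : Integrable (fun x : Fin n → Ξ => 4 * C * ‖empEmb φ x - μ0‖ ^ 2)
      (Measure.pi fun _ => P) := by
    refine myIntegrableBdd (((continuous_pow 2).comp_stronglyMeasurable
      hdm.norm).const_mul (4 * C)).aestronglyMeasurable (4 * C * (2 * Real.sqrt C) ^ 2)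
      fun x => ?_
    have hd : ‖empEmb φ x - μ0‖ ≤ 2 * Real.sqrt C := by
      calc ‖empEmb φ x - μ0‖ ≤ ‖empEmb φ x‖ + ‖μ0‖ := norm_sub_le _ _
        _ ≤ 2 * Real.sqrt C := by linarith [myEmpNorm φ C hC hφ hn x]
    rw [Real.norm_eq_abs, abs_of_nonneg (by positivity)]
    exact mul_le_mul_of_nonneg_left (pow_le_pow_left₀ (norm_nonneg _) hd 2) (by positivity)
  calc ∫ x : Fin n → Ξ, ((inner ℝ (empEmb φ x) (empEmb φ x) : ℝ) - (inner ℝ μ0 μ0 : ℝ)) ^ 2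
        ∂(Measure.pi fun _ => P)
      ≤ ∫ x : Fin n → Ξ, 4 * C * ‖empEmb φ x - μ0‖ ^ 2 ∂(Measure.pi fun _ => P) := by
        refine integral_mono_of_nonneg (Filter.Eventually.of_forall fun x => by positivity)
          hrint (Filter.Eventually.of_forall hpt)
    _ = 4 * C * ∫ x : Fin n → Ξ, ‖empEmb φ x - μ0‖ ^ 2 ∂(Measure.pi fun _ => P) :=
        integral_const_mul _ _
    _ ≤ 4 * C * (C / n) := mul_le_mul_of_nonneg_left
        (myDev P φ hφm C hC hφ n hn μ0 hμ0) (by positivity)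
    _ = 4 * C ^ 2 / n := by ring
end



section
variable {H : Type*} [NormedAddCommGroup H] [InnerProductSpace ℝ H] [CompleteSpace H]
  {Ξ : Type*} [MeasurableSpace Ξ]

set_option linter.unusedSectionVars false

end

/-- **Second-moment bound for the diagonal of the empirical Gram matrix.**
`E[Σ_i (⟨μ̂_i,μ̂_i⟩ − ⟨μ_i,μ_i⟩)²] ≤ 4C²/n̄`, the expectation being over the `M`
mutually independent datasets. -/
theorem empirical_gram_diagonal_second_moment_bound
    {H : Type*} [NormedAddCommGroup H] [InnerProductSpace ℝ H] [CompleteSpace H]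
    {Ξ : Type*} [MeasurableSpace Ξ]
    (C : ℝ) (hC : 0 < C)
    (φ : Ξ → H) (hφm : StronglyMeasurable φ) (hφ : ∀ ξ, ‖φ ξ‖ ^ 2 ≤ C)
    (M : ℕ) (hM : 0 < M)
    (P : Fin M → Measure Ξ) [∀ i, IsProbabilityMeasure (P i)]
    (n : Fin M → ℕ) (hn : ∀ i, 0 < n i)
    (μ : Fin M → H) (hμ : ∀ i, μ i = ∫ ξ, φ ξ ∂(P i))
    (nbar : ℝ) (hnbar : nbar = (∑ i, (1 : ℝ) / n i)⁻¹) :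
    ∫ x : (i : Fin M) → Fin (n i) → Ξ,
        ∑ i, ((inner ℝ (empEmb φ (x i)) (empEmb φ (x i)) : ℝ) - (inner ℝ (μ i) (μ i) : ℝ)) ^ 2
        ∂(Measure.pi fun i => Measure.pi fun _ : Fin (n i) => P i) ≤
      4 * C ^ 2 / nbar := by
  have hb : ∀ ξ, ‖φ ξ‖ ≤ Real.sqrt C := by
    intro ξ
    rw [show ‖φ ξ‖ = Real.sqrt (‖φ ξ‖ ^ 2) by rw [Real.sqrt_sq (norm_nonneg _)]]
    exact Real.sqrt_le_sqrt (hφ ξ)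
  set f : (i : Fin M) → (Fin (n i) → Ξ) → ℝ := fun i y =>
    ((inner ℝ (empEmb φ y) (empEmb φ y) : ℝ) - (inner ℝ (μ i) (μ i) : ℝ)) ^ 2 with hf
  have hfm : ∀ i, StronglyMeasurable (f i) := by
    intro i
    have hm := myEmpSM φ hφm (n i)
    exact (continuous_pow 2).comp_stronglyMeasurable ((hm.inner hm).sub
      stronglyMeasurable_const)
  have hμb : ∀ i, ‖μ i‖ ≤ Real.sqrt C := by
    intro i
    have hφint : Integrable φ (P i) := myIntegrableBdd hφm.aestronglyMeasurable _ hb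
    rw [hμ i]
    calc ‖∫ ξ, φ ξ ∂(P i)‖ ≤ ∫ ξ, ‖φ ξ‖ ∂(P i) := norm_integral_le_integral_norm _
      _ ≤ ∫ _ξ, Real.sqrt C ∂(P i) := integral_mono hφint.norm (integrable_const _) hb
      _ = Real.sqrt C := by simp
  have hfb : ∀ i y, ‖f i y‖ ≤ (2 * C) ^ 2 := by
    intro i y
    have h1 : ‖empEmb φ y‖ ^ 2 ≤ C := by
      calc ‖empEmb φ y‖ ^ 2 ≤ Real.sqrt C ^ 2 :=
          pow_le_pow_left₀ (norm_nonneg _) (myEmpNorm φ C hC hφ (hn i) y) 2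
        _ = C := Real.sq_sqrt hC.le
    have h2 : ‖μ i‖ ^ 2 ≤ C := by
      calc ‖μ i‖ ^ 2 ≤ Real.sqrt C ^ 2 := pow_le_pow_left₀ (norm_nonneg _) (hμb i) 2
        _ = C := Real.sq_sqrt hC.le
    rw [hf]
    simp only [real_inner_self_eq_norm_sq]
    rw [Real.norm_eq_abs, abs_of_nonneg (by positivity)]
    nlinarith [sq_nonneg ‖empEmb φ y‖, sq_nonneg ‖μ i‖, hC.le]
  have hint : ∀ i : Fin M, Integrable (fun x : (i : Fin M) → Fin (n i) → Ξ => f i (x i))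
      (Measure.pi fun i => Measure.pi fun _ : Fin (n i) => P i) := by
    intro i
    exact myIntegrableBdd ((hfm i).comp_measurable
      (measurable_pi_apply i)).aestronglyMeasurable _ (fun x => hfb i (x i))
  rw [show (fun x : (i : Fin M) → Fin (n i) → Ξ =>
      ∑ i, ((inner ℝ (empEmb φ (x i)) (empEmb φ (x i)) : ℝ) - (inner ℝ (μ i) (μ i) : ℝ)) ^ 2)
      = fun x => ∑ i, f i (x i) from rfl]
  rw [integral_finset_sum Finset.univ fun i _ => hint i]
  have heval : ∀ i : Fin M, ∫ x : (i : Fin M) → Fin (n i) → Ξ, f i (x i)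
      ∂(Measure.pi fun i => Measure.pi fun _ : Fin (n i) => P i)
      = ∫ y, f i y ∂(Measure.pi fun _ : Fin (n i) => P i) := by
    intro i
    exact myIntegralEvalPi (fun i => Measure.pi fun _ : Fin (n i) => P i) i (f i)
      (hfm i).aestronglyMeasurable
  have hsum : ∑ i, ∫ x : (i : Fin M) → Fin (n i) → Ξ, f i (x i)
      ∂(Measure.pi fun i => Measure.pi fun _ : Fin (n i) => P i)
      ≤ ∑ i, 4 * C ^ 2 / n i := by
    refine Finset.sum_le_sum fun i _ => ?_
    rw [heval i]
    exact myDiag (P i) φ hφm C hC hφ (n i) (hn i) (μ i) (hμ i)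
  refine hsum.trans ?_
  rw [hnbar, div_inv_eq_mul, Finset.mul_sum]
  refine le_of_eq (Finset.sum_congr rfl fun i _ => ?_)
  have hni : ((n i : ℝ)) ≠ 0 := by exact_mod_cast (hn i).ne'
  rw [mul_one_div]
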